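/- Let n_1, n_2 ≥ 2 be integers and let d = gcd(n_1, n_2). If the Cartesian product C⃗_{n_1} □ C⃗_{n_2} of the directed cycles on n_1 and n_2 vertices admits a directed Hamiltonian cycle, then d ≥ 2 and there exist positive integers d_1, d_2 with d_1 + d_2 = d such that gcd(n_1, d_1) = 1 and gcd(n_2, d_2) = 1. -/

import Mathlib

/-- The directed cycle on vertex set `ZMod n`, with an arc from `i` to `i + 1` for each `i`. -/
def dirCycleDigraph (n : ℕ) : Digraph (ZMod n) where
  Adj i j := j = i + 1

/-- The Cartesian product of two digraphs. -/
def Digraph.cartesianProd {α β : Type*} (D₁ : Digraph α) (D₂ : Digraph β) :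
    Digraph (α × β) where
  Adj u v := (u.1 = v.1 ∧ D₂.Adj u.2 v.2) ∨ (u.2 = v.2 ∧ D₁.Adj u.1 v.1)

/-- `D.HasDirCycleOfLen n` means that `D` contains a directed cycle of length `n`. -/
def Digraph.HasDirCycleOfLen {V : Type*} (D : Digraph V) (n : ℕ) : Prop :=
  1 ≤ n ∧ ∃ f : ZMod n → V, Function.Injective f ∧ ∀ i, D.Adj (f i) (f (i + 1))


/-- Arithmetic helper: if `p ∣ g ∣ n` with `0 < g`, then `n / g ∣ n / p`. -/
lemma te_div_dvd_div {p g n : ℕ} (hg : 0 < g) (hpg : p ∣ g) (hgn : g ∣ n) :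
    n / g ∣ n / p := by
  rcases hpg with ⟨a, rfl⟩
  rcases hgn with ⟨b, rfl⟩
  rcases Nat.eq_zero_or_pos p with rfl | hp
  · simp
  have ha : 0 < a := by
    rcases Nat.eq_zero_or_pos a with rfl | h
    · simp at hg
    · exact h
  refine ⟨a, ?_⟩
  rw [Nat.mul_div_cancel_left _ (by positivity), Nat.mul_assoc, Nat.mul_comm a b,
    ← Nat.mul_assoc, Nat.mul_comm p b, Nat.mul_assoc, Nat.mul_comm p a,
    ← Nat.mul_assoc, Nat.mul_div_cancel _ hp]

/-- Number-theoretic endgame. -/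
lemma te_endgame {n₁ n₂ d₁ d₂ : ℕ} (h₁ : 2 ≤ n₁) (h₂ : 2 ≤ n₂)
    (hsum : d₁ + d₂ = Nat.gcd n₁ n₂)
    (hlcm : Nat.lcm (n₁ / Nat.gcd n₁ d₁) (n₂ / Nat.gcd n₂ d₂) = Nat.lcm n₁ n₂) :
    Nat.gcd n₁ d₁ = 1 ∧ Nat.gcd n₂ d₂ = 1 := by
  set g₁ := Nat.gcd n₁ d₁ with hg₁
  set g₂ := Nat.gcd n₂ d₂ with hg₂
  have hn₁ : 0 < n₁ := by omega
  have hn₂ : 0 < n₂ := by omega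
  have hg₁n : g₁ ∣ n₁ := Nat.gcd_dvd_left _ _
  have hg₂n : g₂ ∣ n₂ := Nat.gcd_dvd_left _ _
  have hg₁pos : 0 < g₁ := Nat.gcd_pos_of_pos_left _ hn₁
  have hg₂pos : 0 < g₂ := Nat.gcd_pos_of_pos_left _ hn₂
  have hLpos : 0 < Nat.lcm n₁ n₂ := Nat.pos_of_ne_zero (fun h => by
    have := Nat.gcd_mul_lcm n₁ n₂
    rw [h, Nat.mul_zero] at this
    have : n₁ * n₂ = 0 := this.symm
    rcases Nat.mul_eq_zero.mp this with h' | h' <;> omega)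
  -- Step A : g₁ * g₂ ∣ gcd n₁ n₂
  have hA : g₁ * g₂ ∣ Nat.gcd n₁ n₂ := by
    have hdvd : Nat.lcm n₁ n₂ ∣ n₁ / g₁ * (n₂ / g₂) := by
      rw [← hlcm]
      exact Nat.lcm_dvd (dvd_mul_right _ _) (dvd_mul_left _ _)
    rw [Nat.div_mul_div_comm hg₁n hg₂n] at hdvd
    rcases hdvd with ⟨k, hk⟩
    refine ⟨k, ?_⟩
    have h1 : n₁ * n₂ = Nat.lcm n₁ n₂ * k * (g₁ * g₂) := by
      rw [← hk, Nat.div_mul_cancel (mul_dvd_mul hg₁n hg₂n)]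
    have h2 : n₁ * n₂ = Nat.lcm n₁ n₂ * Nat.gcd n₁ n₂ := by
      rw [Nat.mul_comm (Nat.lcm n₁ n₂), Nat.gcd_mul_lcm]
    have h3 : Nat.lcm n₁ n₂ * (k * (g₁ * g₂)) = Nat.lcm n₁ n₂ * Nat.gcd n₁ n₂ := by
      rw [← Nat.mul_assoc, ← h1, h2]
    have := (Nat.eq_of_mul_eq_mul_left hLpos h3).symm
    rw [this, Nat.mul_comm]
  -- Step B : by contradiction
  by_contra hcon
  have hne : g₁ * g₂ ≠ 1 := by
    intro h
    have ha : g₁ = 1 := Nat.eq_one_of_mul_eq_one_right h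
    have hb : g₂ = 1 := Nat.eq_one_of_mul_eq_one_left h
    exact hcon ⟨ha, hb⟩
  obtain ⟨p, hp, hpdvd⟩ := Nat.exists_prime_and_dvd hne
  have hpD : p ∣ Nat.gcd n₁ n₂ := hpdvd.trans hA
  have hboth : p ∣ g₁ ∧ p ∣ g₂ := by
    have hpd₁d₂ : p ∣ d₁ + d₂ := hsum ▸ hpD
    rcases (Nat.Prime.dvd_mul hp).mp hpdvd with h | h
    · have hpd₁ : p ∣ d₁ := h.trans (Nat.gcd_dvd_right _ _)
      have hpd₂ : p ∣ d₂ := by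
        have h' : p ∣ d₁ + d₂ - d₁ := Nat.dvd_sub hpd₁d₂ hpd₁
        have he : d₁ + d₂ - d₁ = d₂ := by omega
        rwa [he] at h'
      exact ⟨h, Nat.dvd_gcd (hpD.trans (Nat.gcd_dvd_right _ _)) hpd₂⟩
    · have hpd₂ : p ∣ d₂ := h.trans (Nat.gcd_dvd_right _ _)
      have hpd₁ : p ∣ d₁ := by
        have h' : p ∣ d₁ + d₂ - d₂ := Nat.dvd_sub hpd₁d₂ hpd₂
        have he : d₁ + d₂ - d₂ = d₁ := by omega
        rwa [he] at h'
      exact ⟨Nat.dvd_gcd (hpD.trans (Nat.gcd_dvd_left _ _)) hpd₁, h⟩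
  obtain ⟨hpg₁, hpg₂⟩ := hboth
  have hpn₁ : p ∣ n₁ := hpg₁.trans hg₁n
  have hpn₂ : p ∣ n₂ := hpg₂.trans hg₂n
  have h1 : n₁ / g₁ ∣ n₁ / p := te_div_dvd_div hg₁pos hpg₁ hg₁n
  have h2 : n₂ / g₂ ∣ n₂ / p := te_div_dvd_div hg₂pos hpg₂ hg₂n
  have hLd : Nat.lcm n₁ n₂ ∣ Nat.lcm (n₁ / p) (n₂ / p) := by
    rw [← hlcm]
    exact Nat.lcm_dvd (h1.trans (Nat.dvd_lcm_left _ _)) (h2.trans (Nat.dvd_lcm_right _ _))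
  have hmul : Nat.lcm (n₁ / p) (n₂ / p) * p = Nat.lcm n₁ n₂ := by
    conv_rhs => rw [← Nat.div_mul_cancel hpn₁, ← Nat.div_mul_cancel hpn₂]
    rw [Nat.lcm_mul_right]
  have hMpos : 0 < Nat.lcm (n₁ / p) (n₂ / p) := by
    rcases Nat.eq_zero_or_pos (Nat.lcm (n₁ / p) (n₂ / p)) with h | h
    · rw [h] at hmul; simp at hmul; omega
    · exact h
  have hle : Nat.lcm n₁ n₂ ≤ Nat.lcm (n₁ / p) (n₂ / p) := Nat.le_of_dvd hMpos hLd
  have hlt : Nat.lcm (n₁ / p) (n₂ / p) < Nat.lcm n₁ n₂ := by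
    rw [← hmul]
    exact Nat.lt_mul_iff_one_lt_right hMpos |>.mpr hp.one_lt
  omega

section TE

variable {n₁ n₂ : ℕ}

/-- The diagonal class map. -/
def tePsi (d : ℕ) (hd1 : d ∣ n₁) (hd2 : d ∣ n₂) (v : ZMod n₁ × ZMod n₂) : ZMod d :=
  ZMod.castHom hd1 (ZMod d) v.1 + ZMod.castHom hd2 (ZMod d) v.2

/-- Canonical index for a diagonal class. -/
noncomputable def teIota {d : ℕ} (f : ZMod (n₁ * n₂) → ZMod n₁ × ZMod n₂)
    (c : ZMod d) : ZMod (n₁ * n₂) :=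
  Function.invFun f ((c.val : ZMod n₁), 0)

/-- Whether the move made from diagonal class `c` is a first-coordinate move. -/
noncomputable def teG {d : ℕ} (f : ZMod (n₁ * n₂) → ZMod n₁ × ZMod n₂)
    (c : ZMod d) : Prop :=
  f (teIota f c + 1) = f (teIota f c) + ((1 : ZMod n₁), (0 : ZMod n₂))

open Classical in
/-- The displacement of the move made from diagonal class `c`. -/
noncomputable def teDelta {d : ℕ} (f : ZMod (n₁ * n₂) → ZMod n₁ × ZMod n₂)
    (c : ZMod d) : ZMod n₁ × ZMod n₂ :=
  if teG f c then ((1 : ZMod n₁), (0 : ZMod n₂)) else ((0 : ZMod n₁), (1 : ZMod n₂))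

lemma te_crt {n₁ n₂ d : ℕ} [NeZero n₁] [NeZero n₂] [NeZero d]
    (hd : d = Nat.gcd n₁ n₂) (hd1 : d ∣ n₁) (hd2 : d ∣ n₂)
    (x : ZMod n₁) (y : ZMod n₂)
    (h : ZMod.castHom hd1 (ZMod d) x + ZMod.castHom hd2 (ZMod d) y = 0) :
    ∃ k : ℤ, (x, y) = k • ((1 : ZMod n₁), (-1 : ZMod n₂)) := by
  have hx : ((x.val : ℤ) : ZMod n₁) = x := by
    push_cast
    exact ZMod.natCast_rightInverse x
  have hy : ((y.val : ℤ) : ZMod n₂) = y := by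
    push_cast
    exact ZMod.natCast_rightInverse y
  have hcx : ZMod.castHom hd1 (ZMod d) x = ((x.val : ℕ) : ZMod d) := by
    rw [ZMod.castHom_apply, ← ZMod.natCast_val]
  have hcy : ZMod.castHom hd2 (ZMod d) y = ((y.val : ℕ) : ZMod d) := by
    rw [ZMod.castHom_apply, ← ZMod.natCast_val]
  rw [hcx, hcy] at h
  have hdvd : d ∣ x.val + y.val := by
    rwa [← Nat.cast_add, ZMod.natCast_eq_zero_iff] at h
  obtain ⟨m, hm⟩ := hdvd
  have hbez : (d : ℤ) = n₁ * Nat.gcdA n₁ n₂ + n₂ * Nat.gcdB n₁ n₂ := by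
    rw [hd]; exact Nat.gcd_eq_gcd_ab n₁ n₂
  set A : ℤ := (x.val : ℤ) with hA
  set B : ℤ := (y.val : ℤ) with hB
  have hAB : A + B = (d : ℤ) * m := by
    rw [hA, hB, ← Nat.cast_add, hm]; push_cast; ring
  set k : ℤ := A - n₁ * Nat.gcdA n₁ n₂ * m with hkdef
  have hk1 : ((k : ℤ) : ZMod n₁) = x := by
    rw [hkdef]
    push_cast
    rw [ZMod.natCast_self]
    simpa using hx
  have hk2 : ((k : ℤ) : ZMod n₂) = -y := by
    have hint : k = -(B - n₂ * Nat.gcdB n₁ n₂ * m) := by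
      have h' : (n₁ : ℤ) * Nat.gcdA n₁ n₂ = d - n₂ * Nat.gcdB n₁ n₂ := by linarith [hbez]
      rw [hkdef, h']; linarith [hAB]
    rw [hint]
    push_cast
    rw [ZMod.natCast_self]
    rw [hB] at *
    push_cast
    simp [hy]
  refine ⟨k, ?_⟩
  have hsm : k • ((1 : ZMod n₁), (-1 : ZMod n₂)) = (((k : ℤ) : ZMod n₁), -((k : ℤ) : ZMod n₂)) := by
    have e1 : k • (1 : ZMod n₁) = ((k : ℤ) : ZMod n₁) := by
      rw [zsmul_eq_mul, mul_one]
    have e2 : k • (-1 : ZMod n₂) = -((k : ℤ) : ZMod n₂) := by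
      rw [zsmul_eq_mul]; ring
    exact Prod.ext e1 e2
  rw [hsm, hk1, hk2, neg_neg]

lemma te_key (h₁ : 2 ≤ n₁) (h₂ : 2 ≤ n₂)
    (f : ZMod (n₁ * n₂) → ZMod n₁ × ZMod n₂)
    (hinj : Function.Injective f)
    (hadj : ∀ i, ((dirCycleDigraph n₁).cartesianProd (dirCycleDigraph n₂)).Adj (f i) (f (i + 1))) :
    ∃ d₁ d₂ : ℕ, d₁ + d₂ = Nat.gcd n₁ n₂ ∧
      Nat.lcm (n₁ / Nat.gcd n₁ d₁) (n₂ / Nat.gcd n₂ d₂) = Nat.lcm n₁ n₂ := by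
  classical
  haveI : NeZero n₁ := ⟨by omega⟩
  haveI : NeZero n₂ := ⟨by omega⟩
  haveI : NeZero (n₁ * n₂) := ⟨by positivity⟩
  haveI : Fact (1 < n₁) := ⟨h₁⟩
  haveI : Fact (1 < n₂) := ⟨h₂⟩
  set d := Nat.gcd n₁ n₂ with hd
  have hdn₁ : d ∣ n₁ := Nat.gcd_dvd_left _ _
  have hdn₂ : d ∣ n₂ := Nat.gcd_dvd_right _ _
  have hdpos : 0 < d := Nat.gcd_pos_of_pos_left _ (by omega)
  haveI : NeZero d := ⟨by omega⟩
  have hsurj : Function.Surjective f := by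
    have hcard : Fintype.card (ZMod (n₁ * n₂)) = Fintype.card (ZMod n₁ × ZMod n₂) := by
      simp [ZMod.card]
    exact ((Fintype.bijective_iff_injective_and_card f).mpr ⟨hinj, hcard⟩).2
  set a : ZMod n₁ × ZMod n₂ := ((1 : ZMod n₁), (0 : ZMod n₂)) with ha
  set b : ZMod n₁ × ZMod n₂ := ((0 : ZMod n₁), (1 : ZMod n₂)) with hb
  have hone₁ : (1 : ZMod n₁) ≠ 0 := one_ne_zero
  have hab : a ≠ b := fun h => hone₁ (by simpa [ha, hb] using congrArg Prod.fst h)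
  have hc : a - b = ((1 : ZMod n₁), (-1 : ZMod n₂)) := by
    rw [ha, hb, Prod.mk_sub_mk]; simp
  have habne : a - b ≠ 0 := fun h => hab (sub_eq_zero.mp h)
  -- step dichotomy
  have hstep : ∀ i, f (i + 1) = f i + a ∨ f (i + 1) = f i + b := by
    intro i
    have h := hadj i
    simp only [Digraph.cartesianProd, dirCycleDigraph] at h
    rcases h with ⟨e1, e2⟩ | ⟨e1, e2⟩
    · right
      rw [hb, Prod.ext_iff]
      constructor
      · simp [← e1]
      · simpa using e2
    · left
      rw [ha, Prod.ext_iff]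
      constructor
      · simpa using e2
      · simp [← e1]
  have hexcl : ∀ i, f (i + 1) = f i + a → f (i + 1) = f i + b → False := by
    intro i h h'
    rw [h] at h'
    exact hab (add_left_cancel h')
  -- Rankin step: the move type is constant along the (1,-1)-diagonal
  have Kc : ∀ i j, f j = f i + (a - b) →
      ((f (i + 1) = f i + a) ↔ (f (j + 1) = f j + a)) := by
    intro i j hji
    obtain ⟨i', hi'⟩ := hsurj (f i + a)
    have hi₀ : f ((i' - 1) + 1) = f i + a := by rw [sub_add_cancel]; exact hi'
    set i₀ := i' - 1 with hi₀def
    have hfj : f j + b = f i + a := by rw [hji]; abel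
    rcases hstep i₀ with h0 | h0
    · -- the in-arc of `f i + a` is an a-move, coming from `f i`
      have hfe : f i₀ = f i := add_right_cancel (h0.symm.trans hi₀)
      have hii : i₀ = i := hinj hfe
      have hPi : f (i + 1) = f i + a := by rw [← hii, hfe] at hi₀ ⊢; exact hi₀
      have hPj : f (j + 1) = f j + a := by
        rcases hstep j with hj | hj
        · exact hj
        · exfalso
          have he : f (j + 1) = f (i₀ + 1) := by rw [hj, hfj, hi₀]
          have hj_eq : j = i₀ := add_right_cancel (hinj he)
          rw [hj_eq, hii] at hji
          exact habne (left_eq_add.mp hji)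
      exact iff_of_true hPi hPj
    · -- the in-arc of `f i + a` is a b-move, coming from `f j`
      have hfe : f i₀ = f j := by
        have h' := h0.symm.trans hi₀
        rw [← hfj] at h'
        exact add_right_cancel h'
      have hij : i₀ = j := hinj hfe
      have hnPj : ¬ f (j + 1) = f j + a := by
        intro hPj
        rw [hij] at h0
        exact hexcl j hPj h0
      have hnPi : ¬ f (i + 1) = f i + a := by
        intro hPi
        have he : f (i + 1) = f (i₀ + 1) := by rw [hPi, hi₀]
        have : i = i₀ := add_right_cancel (hinj he)
        rw [← this] at hij
        rw [hij] at hji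
        exact habne (left_eq_add.mp hji)
      exact iff_of_false hnPi hnPj
  -- iterate along the diagonal
  have Kz : ∀ (k : ℤ) (i j : ZMod (n₁ * n₂)), f j = f i + k • (a - b) →
      ((f (i + 1) = f i + a) ↔ (f (j + 1) = f j + a)) := by
    intro k
    induction k using Int.induction_on with
    | zero =>
      intro i j h
      rw [zero_smul, add_zero] at h
      rw [hinj h]
    | succ k ih =>
      intro i j h
      obtain ⟨j', hj'⟩ := hsurj (f i + (k : ℤ) • (a - b))
      have h2 : f j = f j' + (a - b) := by
        rw [hj', h, add_assoc]
        congr 1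
        rw [add_smul, one_smul]
      exact (ih i j' hj').trans (Kc j' j h2)
    | pred k ih =>
      intro i j h
      obtain ⟨j', hj'⟩ := hsurj (f i + (-(k : ℤ)) • (a - b))
      have h2 : f j' = f j + (a - b) := by
        rw [hj', h, add_assoc]
        congr 1
        rw [sub_smul, one_smul]
        abel
      exact (ih i j' hj').trans (Kc j j' h2).symm
  -- ψ basics
  have hψadd : ∀ u v, tePsi d hdn₁ hdn₂ (u + v) = tePsi d hdn₁ hdn₂ u + tePsi d hdn₁ hdn₂ v := by
    intro u v
    simp only [tePsi, Prod.fst_add, Prod.snd_add, map_add]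
    ring
  have hψsub : ∀ u v, tePsi d hdn₁ hdn₂ (u - v) = tePsi d hdn₁ hdn₂ u - tePsi d hdn₁ hdn₂ v := by
    intro u v
    simp only [tePsi, Prod.fst_sub, Prod.snd_sub, map_sub]
    ring
  have hψa : tePsi d hdn₁ hdn₂ a = 1 := by
    rw [ha]; simp only [tePsi]; rw [map_one, map_zero, add_zero]
  have hψb : tePsi d hdn₁ hdn₂ b = 1 := by
    rw [hb]; simp only [tePsi]; rw [map_one, map_zero, zero_add]
  -- move type only depends on the diagonal class
  have Kclass : ∀ i j, tePsi d hdn₁ hdn₂ (f i) = tePsi d hdn₁ hdn₂ (f j) →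
      ((f (i + 1) = f i + a) ↔ (f (j + 1) = f j + a)) := by
    intro i j h
    have h0 : tePsi d hdn₁ hdn₂ (f j - f i) = 0 := by
      rw [hψsub, h, sub_self]
    obtain ⟨k, hk⟩ := te_crt hd hdn₁ hdn₂ (f j - f i).1 (f j - f i).2 h0
    refine Kz k i j ?_
    have : f j - f i = k • (a - b) := by
      rw [hc, ← hk]
    rw [← this, add_sub_cancel]
  -- the class predicate
  have hfι : ∀ c : ZMod d, f (teIota f c) = ((c.val : ZMod n₁), 0) :=
    fun c => Function.rightInverse_invFun hsurj _
  have hψι : ∀ c : ZMod d, tePsi d hdn₁ hdn₂ (f (teIota f c)) = c := by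
    intro c
    rw [hfι, tePsi]
    simp only [map_natCast, map_zero, add_zero]
    exact ZMod.natCast_rightInverse c
  have hgP : ∀ i, (f (i + 1) = f i + a ↔ teG f (tePsi d hdn₁ hdn₂ (f i))) := by
    intro i
    have := Kclass i (teIota f (tePsi d hdn₁ hdn₂ (f i))) (hψι _).symm
    rw [this]
    rfl
  -- the step map in terms of classes
  have hstep' : ∀ i, f (i + 1) = f i + teDelta f (tePsi d hdn₁ hdn₂ (f i)) := by
    intro i
    by_cases hp : f (i + 1) = f i + a
    · rw [teDelta, if_pos ((hgP i).mp hp)]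
      exact hp
    · rw [teDelta, if_neg (fun hgc => hp ((hgP i).mpr hgc))]
      exact (hstep i).resolve_left hp
  have hψδ : ∀ c : ZMod d, tePsi d hdn₁ hdn₂ (teDelta f c) = 1 := by
    intro c
    rw [teDelta]
    by_cases h : teG f c
    · rw [if_pos h, ← ha, hψa]
    · rw [if_neg h, ← hb, hψb]
  have hψ1 : ∀ i, tePsi d hdn₁ hdn₂ (f (i + 1)) = tePsi d hdn₁ hdn₂ (f i) + 1 := by
    intro i
    rw [hstep' i, hψadd, hψδ]
  have hψk : ∀ (i : ZMod (n₁ * n₂)) (k : ℕ),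
      tePsi d hdn₁ hdn₂ (f (i + (k : ℕ))) = tePsi d hdn₁ hdn₂ (f i) + (k : ZMod d) := by
    intro i k
    induction k with
    | zero => simp
    | succ k ih =>
      have he : i + ((k + 1 : ℕ) : ZMod (n₁ * n₂)) = (i + (k : ℕ)) + 1 := by
        push_cast; ring
      rw [he, hψ1, ih]
      push_cast; ring
  have hiter : ∀ (i : ZMod (n₁ * n₂)) (k : ℕ),
      f (i + (k : ℕ)) = f i + ∑ j ∈ Finset.range k,
        teDelta f (tePsi d hdn₁ hdn₂ (f i) + (j : ZMod d)) := by
    intro i k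
    induction k with
    | zero => simp
    | succ k ih =>
      have he : i + ((k + 1 : ℕ) : ZMod (n₁ * n₂)) = (i + (k : ℕ)) + 1 := by
        push_cast; ring
      rw [he, hstep', hψk, ih, Finset.sum_range_succ, add_assoc]
  -- the displacement over d consecutive steps
  set d₁ := (Finset.univ.filter (fun c : ZMod d => teG f c)).card with hd₁
  set d₂ := (Finset.univ.filter (fun c : ZMod d => ¬ teG f c)).card with hd₂
  set w := ∑ c : ZMod d, teDelta f c with hw
  have hsum_shift : ∀ c₀ : ZMod d,
      ∑ j ∈ Finset.range d, teDelta f (c₀ + (j : ZMod d)) = w := by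
    intro c₀
    rw [hw]
    refine Finset.sum_nbij' (fun j => c₀ + (j : ZMod d)) (fun c => (c - c₀).val)
      (fun _ _ => Finset.mem_univ _)
      (fun c _ => Finset.mem_range.mpr (ZMod.val_lt _)) ?_ ?_ (fun _ _ => rfl)
    · intro j hj
      show ((c₀ + (j : ZMod d)) - c₀).val = j
      rw [add_sub_cancel_left]
      exact ZMod.val_cast_of_lt (Finset.mem_range.mp hj)
    · intro c _
      show c₀ + (((c - c₀).val : ℕ) : ZMod d) = c
      rw [ZMod.natCast_rightInverse (c - c₀), add_sub_cancel]
  have hwd : ∀ i, f (i + (d : ℕ)) = f i + w := by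
    intro i
    rw [hiter i d, hsum_shift]
  have hwk : ∀ (k : ℕ) (i), f (i + ((d * k : ℕ) : ZMod (n₁ * n₂))) = f i + k • w := by
    intro k
    induction k with
    | zero => intro i; simp
    | succ k ih =>
      intro i
      have he : i + ((d * (k + 1) : ℕ) : ZMod (n₁ * n₂))
          = (i + ((d * k : ℕ) : ZMod (n₁ * n₂))) + ((d : ℕ) : ZMod (n₁ * n₂)) := by
        push_cast; ring
      rw [he, hwd, ih, succ_nsmul, add_assoc]
  set r := addOrderOf w with hr
  have hNdr : (n₁ * n₂) ∣ d * r := by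
    have h0 := hwk r 0
    rw [addOrderOf_nsmul_eq_zero, add_zero] at h0
    have h1 : (0 : ZMod (n₁ * n₂)) + ((d * r : ℕ) : ZMod (n₁ * n₂)) = 0 := hinj h0
    rw [zero_add] at h1
    exact (ZMod.natCast_eq_zero_iff _ _).mp h1
  have hw1 : w.1 = ((d₁ : ℕ) : ZMod n₁) := by
    rw [hw, Prod.fst_sum, hd₁, ← Finset.sum_boole]
    refine Finset.sum_congr rfl (fun c _ => ?_)
    rw [teDelta]
    by_cases h : teG f c
    · rw [if_pos h, if_pos h]
    · rw [if_neg h, if_neg h]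
  have hw2 : w.2 = ((d₂ : ℕ) : ZMod n₂) := by
    rw [hw, Prod.snd_sum, hd₂, ← Finset.sum_boole]
    refine Finset.sum_congr rfl (fun c _ => ?_)
    rw [teDelta]
    by_cases h : teG f c
    · rw [if_pos h, if_neg (not_not_intro h)]
    · rw [if_neg h, if_pos h]
  have ho1 : addOrderOf w.1 = n₁ / Nat.gcd n₁ d₁ := by
    rw [hw1]
    exact ZMod.addOrderOf_coe d₁ (NeZero.ne n₁)
  have ho2 : addOrderOf w.2 = n₂ / Nat.gcd n₂ d₂ := by
    rw [hw2]
    exact ZMod.addOrderOf_coe d₂ (NeZero.ne n₂)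
  have hrval : r = Nat.lcm (n₁ / Nat.gcd n₁ d₁) (n₂ / Nat.gcd n₂ d₂) := by
    rw [hr, Prod.addOrderOf, ho1, ho2]
  have hrdvd : r ∣ Nat.lcm n₁ n₂ := by
    rw [hrval]
    exact Nat.lcm_dvd
      ((Nat.div_dvd_of_dvd (Nat.gcd_dvd_left n₁ d₁)).trans (Nat.dvd_lcm_left _ _))
      ((Nat.div_dvd_of_dvd (Nat.gcd_dvd_left n₂ d₂)).trans (Nat.dvd_lcm_right _ _))
  have hdr : d * r = n₁ * n₂ := by
    apply Nat.dvd_antisymm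
    · have h' : d * r ∣ d * Nat.lcm n₁ n₂ := mul_dvd_mul_left d hrdvd
      rwa [hd, Nat.gcd_mul_lcm] at h'
    · exact hNdr
  have hreq : r = Nat.lcm n₁ n₂ := by
    have h' : d * r = d * Nat.lcm n₁ n₂ := by
      rw [hdr]
      conv_lhs => rw [← Nat.gcd_mul_lcm n₁ n₂]
    exact Nat.eq_of_mul_eq_mul_left hdpos h'
  refine ⟨d₁, d₂, ?_, ?_⟩
  · rw [hd₁, hd₂, Finset.card_filter_add_card_filter_not, Finset.card_univ,
      ZMod.card]
  · rw [← hrval, hreq]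

end TE


/-- If the Cartesian product of the directed cycles on `n₁ ≥ 2` and `n₂ ≥ 2` vertices has
a directed Hamiltonian cycle, then `d := gcd(n₁, n₂) ≥ 2` and there exist positive
integers `d₁, d₂` with `d₁ + d₂ = d`, `gcd(n₁, d₁) = 1` and `gcd(n₂, d₂) = 1`. -/
theorem trotter_erdos (n₁ n₂ : ℕ) (h₁ : 2 ≤ n₁) (h₂ : 2 ≤ n₂) (d : ℕ)
    (hd : d = Nat.gcd n₁ n₂)
    (hham : ((dirCycleDigraph n₁).cartesianProd (dirCycleDigraph n₂)).HasDirCycleOfLen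
      (n₁ * n₂)) :
    2 ≤ d ∧ ∃ d₁ d₂ : ℕ, 0 < d₁ ∧ 0 < d₂ ∧ d₁ + d₂ = d ∧
      Nat.gcd n₁ d₁ = 1 ∧ Nat.gcd n₂ d₂ = 1 := by
  unfold Digraph.HasDirCycleOfLen at hham
  obtain ⟨-, f, hinj, hadj⟩ := hham
  obtain ⟨d₁, d₂, hsum, hlcm⟩ := te_key h₁ h₂ f hinj hadj
  obtain ⟨hg1, hg2⟩ := te_endgame h₁ h₂ hsum hlcm
  have hd₁pos : 0 < d₁ := by
    rcases Nat.eq_zero_or_pos d₁ with rfl | h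
    · rw [Nat.gcd_zero_right] at hg1; omega
    · exact h
  have hd₂pos : 0 < d₂ := by
    rcases Nat.eq_zero_or_pos d₂ with rfl | h
    · rw [Nat.gcd_zero_right] at hg2; omega
    · exact h
  refine ⟨by omega, d₁, d₂, hd₁pos, hd₂pos, by omega, hg1, hg2⟩
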